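/- arXiv:1803.01570 — 5 statements merged into one kernel-verified Lean document; each statement's English description precedes it below -/
import Mathlib

section
/- Let D, N be positive integers, let x_1, …, x_N ∈ ℝ^D, let s_1, …, s_N ∈ {−1, +1}, let λ' > 0, and let ‖·‖ be any norm on ℝ^D (i.e., a function ℝ^D → ℝ that is nonnegative, vanishes exactly at 0, is absolutely homogeneous, and satisfies the triangle inequality), with dual norm ‖w‖_* := sup { ⟨w, x⟩ : x ∈ ℝ^D, ‖x‖ ≤ 1 }. Assume the training data is non-separable, i.e., there is no w ∈ ℝ^D with s_i ⟨w, x_i⟩ > 0 for all i = 1, …, N. Then the robust optimization problem inf_{w ∈ ℝ^D} sup { Σ_{i=1}^N max(1 − s_i ⟨w, x_i − x̃_i⟩, 0) : x̃_1, …, x̃_N ∈ ℝ^D, Σ_{i=1}^N ‖x̃_i‖ ≤ λ' } and the regularized problem inf_{w ∈ ℝ^D} ( λ' ‖w‖_* + Σ_{i=1}^N max(1 − s_i ⟨w, x_i⟩, 0) ) have the same optimal value, and a vector w ∈ ℝ^D attains the first infimum if and only if it attains the second. -/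
open scoped RealInnerProductSpace

lemma normlike_lower_bound (D : ℕ) (hD : 0 < D) (n : EuclideanSpace ℝ (Fin D) → ℝ)
    (hn_nonneg : ∀ v, 0 ≤ n v)
    (hn_def : ∀ v, n v = 0 ↔ v = 0)
    (hn_homog : ∀ (c : ℝ) (v), n (c • v) = |c| * n v)
    (hn_tri : ∀ v w, n (v + w) ≤ n v + n w) :
    ∃ c > 0, ∀ v, c * ‖v‖ ≤ n v := by
  have hn0 : n 0 = 0 := (hn_def 0).2 rfl
  -- subadditivity over finite sums
  have key : ∀ (f : Fin D → EuclideanSpace ℝ (Fin D)) (t : Finset (Fin D)),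
      n (∑ j ∈ t, f j) ≤ ∑ j ∈ t, n (f j) := by
    intro f t
    induction t using Finset.induction with
    | empty => simp [hn0]
    | insert _ _ h ih =>
      rename_i a tt
      rw [Finset.sum_insert h, Finset.sum_insert h]
      exact le_trans (hn_tri _ _) (by linarith)
  -- upper bound
  set C : ℝ := ∑ j : Fin D, n (EuclideanSpace.single j (1:ℝ)) with hCdef
  have hC0 : 0 ≤ C := Finset.sum_nonneg fun j _ => hn_nonneg _
  have hupper : ∀ v, n v ≤ C * ‖v‖ := by
    intro v
    have hv : v = ∑ j : Fin D, v j • EuclideanSpace.single j (1:ℝ) := by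
      ext k
      rw [WithLp.ofLp_sum, Finset.sum_apply]
      simp [EuclideanSpace.single_apply, mul_comm]
    have h1 : n v ≤ ∑ j : Fin D, |v j| * n (EuclideanSpace.single j (1:ℝ)) := by
      calc n v = n (∑ j : Fin D, v j • EuclideanSpace.single j (1:ℝ)) := by rw [← hv]
        _ ≤ ∑ j : Fin D, n (v j • EuclideanSpace.single j (1:ℝ)) := key _ _
        _ = ∑ j : Fin D, |v j| * n (EuclideanSpace.single j (1:ℝ)) := by
            simp [hn_homog]
    have h2 : ∀ j : Fin D, |v j| ≤ ‖v‖ := by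
      intro j
      have : v j = ⟪EuclideanSpace.single j (1:ℝ), v⟫ := by
        simp [EuclideanSpace.inner_single_left]
      rw [this]
      calc |⟪EuclideanSpace.single j (1:ℝ), v⟫| ≤ ‖EuclideanSpace.single j (1:ℝ)‖ * ‖v‖ :=
            abs_real_inner_le_norm _ _
        _ = ‖v‖ := by simp [EuclideanSpace.norm_single]
    calc n v ≤ ∑ j : Fin D, |v j| * n (EuclideanSpace.single j (1:ℝ)) := h1
      _ ≤ ∑ j : Fin D, ‖v‖ * n (EuclideanSpace.single j (1:ℝ)) :=
          Finset.sum_le_sum fun j _ => mul_le_mul_of_nonneg_right (h2 j) (hn_nonneg _)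
      _ = C * ‖v‖ := by rw [← Finset.mul_sum, mul_comm]
  -- continuity
  have hlip : ∀ u v, |n u - n v| ≤ C * ‖u - v‖ := by
    intro u v
    have h1 : n u - n v ≤ n (u - v) := by
      have := hn_tri (u - v) v; simp at this; linarith
    have h2 : n v - n u ≤ n (u - v) := by
      have := hn_tri (v - u) u; simp at this
      have hneg : n (v - u) = n (u - v) := by
        have : v - u = (-1 : ℝ) • (u - v) := by simp [neg_sub]
        rw [this, hn_homog]; simp
      linarith
    rw [abs_sub_le_iff]
    constructor <;> linarith [hupper (u - v)]
  have hcont : Continuous n := by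
    apply LipschitzWith.continuous (K := C.toNNReal)
    apply LipschitzWith.of_dist_le_mul
    intro u v
    rw [Real.dist_eq, Real.coe_toNNReal C hC0, dist_eq_norm]
    exact hlip u v
  -- minimum on sphere
  have hsne : (Metric.sphere (0:EuclideanSpace ℝ (Fin D)) 1).Nonempty := by
    refine ⟨EuclideanSpace.single ⟨0, hD⟩ (1:ℝ), ?_⟩
    simp [EuclideanSpace.norm_single]
  obtain ⟨v₀, hv₀mem, hv₀min'⟩ :=
    (isCompact_sphere (0:EuclideanSpace ℝ (Fin D)) 1).exists_isMinOn hsne hcont.continuousOn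
  have hv₀min : ∀ u ∈ Metric.sphere (0:EuclideanSpace ℝ (Fin D)) 1, n v₀ ≤ n u := fun u hu => hv₀min' hu
  have hv₀norm : ‖v₀‖ = 1 := by simpa using hv₀mem
  have hv₀ne : v₀ ≠ 0 := by intro h; rw [h] at hv₀norm; simp at hv₀norm
  have hc0 : 0 < n v₀ := lt_of_le_of_ne (hn_nonneg _) fun h => hv₀ne ((hn_def v₀).1 h.symm)
  refine ⟨n v₀, hc0, fun v => ?_⟩
  rcases eq_or_ne v 0 with rfl | hv
  · simp [hn0]
  · have hvnorm : (0:ℝ) < ‖v‖ := norm_pos_iff.2 hv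
    have hmem : ‖v‖⁻¹ • v ∈ Metric.sphere (0:EuclideanSpace ℝ (Fin D)) 1 := by
      simp [norm_smul, abs_of_pos (inv_pos.2 hvnorm), inv_mul_cancel₀ hvnorm.ne']
    have := hv₀min _ hmem
    rw [hn_homog] at this
    rw [abs_of_pos (inv_pos.2 hvnorm)] at this
    calc n v₀ * ‖v‖ ≤ ‖v‖⁻¹ * n v * ‖v‖ := by nlinarith
      _ = n v := by field_simp


/-- Equivalence (same optimal value and same minimizers) of the robust
optimization problem with perturbations bounded in an arbitrary norm, and the
regularized problem with the dual norm, under non-separability of the data. -/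
theorem robust_eq_regularized
    (D N : ℕ) (hD : 0 < D) (hN : 0 < N)
    (x : Fin N → EuclideanSpace ℝ (Fin D)) (s : Fin N → ℝ)
    (hs : ∀ i, s i = 1 ∨ s i = -1)
    (lam : ℝ) (hlam : 0 < lam)
    (n : EuclideanSpace ℝ (Fin D) → ℝ)
    (hn_nonneg : ∀ v, 0 ≤ n v)
    (hn_def : ∀ v, n v = 0 ↔ v = 0)
    (hn_homog : ∀ (c : ℝ) (v), n (c • v) = |c| * n v)
    (hn_tri : ∀ v w, n (v + w) ≤ n v + n w)
    (hnonsep : ¬ ∃ w : EuclideanSpace ℝ (Fin D), ∀ i, 0 < s i * ⟪w, x i⟫)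
    (dualNorm : EuclideanSpace ℝ (Fin D) → ℝ)
    (hdual : ∀ w, dualNorm w = sSup {r : ℝ | ∃ v, n v ≤ 1 ∧ r = ⟪w, v⟫})
    (F G : EuclideanSpace ℝ (Fin D) → ℝ)
    (hF : ∀ w, F w = sSup {r : ℝ | ∃ xt : Fin N → EuclideanSpace ℝ (Fin D),
        (∑ i, n (xt i)) ≤ lam ∧
        r = ∑ i, max (1 - s i * ⟪w, x i - xt i⟫) 0})
    (hG : ∀ w, G w = lam * dualNorm w + ∑ i, max (1 - s i * ⟪w, x i⟫) 0) :
    (⨅ w, F w) = (⨅ w, G w) ∧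
    (∀ w, F w = (⨅ w', F w') ↔ G w = (⨅ w', G w')) := by
  classical
  obtain ⟨c, hc, hlow⟩ := normlike_lower_bound D hD n hn_nonneg hn_def hn_homog hn_tri
  have hn0 : n 0 = 0 := (hn_def 0).2 rfl
  have hs1 : ∀ i, |s i| = 1 := fun i => by rcases hs i with h | h <;> simp [h]
  set S : EuclideanSpace ℝ (Fin D) → Set ℝ :=
    fun w => {r : ℝ | ∃ v, n v ≤ 1 ∧ r = ⟪w, v⟫} with hSdef
  have hdual' : ∀ w, dualNorm w = sSup (S w) := hdual
  set T : EuclideanSpace ℝ (Fin D) → Set ℝ :=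
    fun w => {r : ℝ | ∃ xt : Fin N → EuclideanSpace ℝ (Fin D),
      (∑ i, n (xt i)) ≤ lam ∧ r = ∑ i, max (1 - s i * ⟪w, x i - xt i⟫) 0} with hTdef
  have hF' : ∀ w, F w = sSup (T w) := hF
  have hS0 : ∀ w, (0:ℝ) ∈ S w := fun w => ⟨0, by simp [hn0], by simp⟩
  have hSbdd : ∀ w, BddAbove (S w) := by
    intro w
    refine ⟨‖w‖ * c⁻¹, ?_⟩
    rintro r ⟨v, hv, rfl⟩
    have h1 : ⟪w, v⟫ ≤ ‖w‖ * ‖v‖ := real_inner_le_norm w v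
    have h2 : ‖v‖ ≤ c⁻¹ := by
      have h1le : c * ‖v‖ ≤ 1 := le_trans (hlow v) hv
      nlinarith [inv_pos.2 hc, inv_mul_cancel₀ hc.ne']
    calc ⟪w, v⟫ ≤ ‖w‖ * ‖v‖ := h1
      _ ≤ ‖w‖ * c⁻¹ := mul_le_mul_of_nonneg_left h2 (norm_nonneg w)
  have hdual_nonneg : ∀ w, 0 ≤ dualNorm w := fun w => by
    rw [hdual']; exact le_csSup (hSbdd w) (hS0 w)
  have hinner_le : ∀ w v, ⟪w, v⟫ ≤ n v * dualNorm w := by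
    intro w v
    rcases eq_or_ne v 0 with rfl | hv
    · simp [hn0]
    · have hnv : 0 < n v :=
        lt_of_le_of_ne (hn_nonneg v) fun h => hv ((hn_def v).1 h.symm)
      have hmem : (n v)⁻¹ * ⟪w, v⟫ ∈ S w := by
        refine ⟨(n v)⁻¹ • v, ?_, ?_⟩
        · rw [hn_homog, abs_of_pos (inv_pos.2 hnv), inv_mul_cancel₀ hnv.ne']
        · rw [real_inner_smul_right]
      have := le_csSup (hSbdd w) hmem
      rw [← hdual'] at this
      have h3 := mul_le_mul_of_nonneg_left this hnv.le
      rw [← mul_assoc, mul_inv_cancel₀ hnv.ne', one_mul] at h3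
      exact h3
  have hneg : ∀ v, n (-v) = n v := fun v => by
    rw [← neg_one_smul ℝ v, hn_homog]; simp
  have habs_inner_le : ∀ w v, |⟪w, v⟫| ≤ n v * dualNorm w := by
    intro w v
    rw [abs_le]
    constructor
    · have := hinner_le w (-v)
      rw [inner_neg_right, hneg] at this
      linarith
    · exact hinner_le w v
  have hT0 : ∀ w, (∑ i, max (1 - s i * ⟪w, x i⟫) 0) ∈ T w := by
    intro w
    exact ⟨fun _ => 0, by simp [hn0, hlam.le], by simp⟩
  have hTle : ∀ w, ∀ r ∈ T w, r ≤ G w := by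
    rintro w r ⟨xt, hxt, rfl⟩
    rw [hG]
    have hterm : ∀ i : Fin N, max (1 - s i * ⟪w, x i - xt i⟫) 0 ≤
        max (1 - s i * ⟪w, x i⟫) 0 + n (xt i) * dualNorm w := by
      intro i
      have h1 : 1 - s i * ⟪w, x i - xt i⟫ =
          (1 - s i * ⟪w, x i⟫) + s i * ⟪w, xt i⟫ := by
        rw [inner_sub_right]; ring
      have h2 : |s i * ⟪w, xt i⟫| ≤ n (xt i) * dualNorm w := by
        rw [abs_mul, hs1, one_mul]; exact habs_inner_le w (xt i)
      rw [h1]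
      apply max_le
      · have := le_abs_self (s i * ⟪w, xt i⟫)
        have := le_max_left (1 - s i * ⟪w, x i⟫) (0:ℝ)
        linarith
      · have := abs_nonneg (s i * ⟪w, xt i⟫)
        have := le_max_right (1 - s i * ⟪w, x i⟫) (0:ℝ)
        linarith
    have hsumle : (∑ i, max (1 - s i * ⟪w, x i - xt i⟫) 0) ≤
        (∑ i, max (1 - s i * ⟪w, x i⟫) 0) + (∑ i, n (xt i)) * dualNorm w := by
      rw [Finset.sum_mul, ← Finset.sum_add_distrib]
      exact Finset.sum_le_sum fun i _ => hterm i
    have : (∑ i, n (xt i)) * dualNorm w ≤ lam * dualNorm w :=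
      mul_le_mul_of_nonneg_right hxt (hdual_nonneg w)
    linarith
  have hTbdd : ∀ w, BddAbove (T w) := fun w => ⟨G w, fun r hr => hTle w r hr⟩
  have hFG : ∀ w, F w = G w := by
    intro w
    apply le_antisymm
    · rw [hF']
      exact csSup_le ⟨_, hT0 w⟩ (fun r hr => hTle w r hr)
    · rw [hG]
      have hnonsep' : ∀ w', ∃ i, s i * ⟪w', x i⟫ ≤ 0 := by
        intro w'
        by_contra h
        push_neg at h
        exact hnonsep ⟨w', h⟩
      obtain ⟨i₀, hi₀⟩ := hnonsep' w
      set M : ℝ := ∑ i, max (1 - s i * ⟪w, x i⟫) 0 with hMdef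
      have hkey : ∀ t ∈ S w, lam * t + M ≤ F w := by
        intro t ht
        have hM : M ≤ F w := by rw [hF']; exact le_csSup (hTbdd w) (hT0 w)
        rcases le_or_gt t 0 with htneg | htpos
        · nlinarith
        · obtain ⟨v, hv1, rfl⟩ := ht
          set xt : Fin N → EuclideanSpace ℝ (Fin D) :=
            fun i => if i = i₀ then (lam * s i₀) • v else 0 with hxtdef
          have hbudget : (∑ i, n (xt i)) ≤ lam := by
            have : ∀ i : Fin N, n (xt i) = if i = i₀ then n ((lam * s i₀) • v) else 0 := by
              intro i
              by_cases h : i = i₀ <;> simp [hxtdef, h, hn0]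
            rw [Finset.sum_congr rfl fun i _ => this i, Finset.sum_ite_eq']
            simp only [Finset.mem_univ, if_true]
            rw [hn_homog, abs_mul, hs1, abs_of_pos hlam, mul_one]
            nlinarith [hn_nonneg v]
          have hval : (∑ i, max (1 - s i * ⟪w, x i - xt i⟫) 0) = M + lam * ⟪w, v⟫ := by
            have hterm : ∀ i : Fin N, max (1 - s i * ⟪w, x i - xt i⟫) 0 =
                max (1 - s i * ⟪w, x i⟫) 0 + (if i = i₀ then lam * ⟪w, v⟫ else 0) := by
              intro i
              by_cases h : i = i₀
              · subst h
                have hsq : s i * s i = 1 := by rcases hs i with h | h <;> rw [h] <;> norm_num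
                have hxteq : xt i = (lam * s i) • v := by simp [hxtdef]
                rw [hxteq, inner_sub_right, real_inner_smul_right, if_pos rfl]
                have hexp : 1 - s i * (⟪w, x i⟫ - lam * s i * ⟪w, v⟫) =
                    (1 - s i * ⟪w, x i⟫) + lam * ⟪w, v⟫ := by
                  linear_combination (lam * ⟪w, v⟫) * hsq
                rw [hexp]
                have h0 : 0 ≤ lam * ⟪w, v⟫ := mul_nonneg hlam.le htpos.le
                rw [max_eq_left (by linarith), max_eq_left (by linarith)]
              · have hxteq : xt i = 0 := by simp [hxtdef, h]
                rw [hxteq, if_neg h]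
                simp
            rw [Finset.sum_congr rfl fun i _ => hterm i, Finset.sum_add_distrib,
              Finset.sum_ite_eq']
            simp [hMdef]
          have hmem : M + lam * ⟪w, v⟫ ∈ T w := ⟨xt, hbudget, hval.symm⟩
          have := le_csSup (hTbdd w) hmem
          rw [← hF'] at this
          linarith
      have hds : dualNorm w ≤ (F w - M) / lam := by
        rw [hdual']
        apply csSup_le ⟨0, hS0 w⟩
        intro t ht
        have := hkey t ht
        rw [le_div_iff₀ hlam]
        linarith
      have : lam * dualNorm w ≤ lam * ((F w - M) / lam) :=
        mul_le_mul_of_nonneg_left hds hlam.le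
      have heq : lam * ((F w - M) / lam) = F w - M := by field_simp
      linarith
  have hFGfun : F = G := funext hFG
  subst hFGfun
  exact ⟨rfl, fun w => Iff.rfl⟩
end

section
/- Let D, N be positive integers, let x_1, …, x_N ∈ ℝ^D, let s_1, …, s_N ∈ {−1, +1}, let λ' > 0, and let ‖·‖ be any norm on ℝ^D with dual norm ‖w‖_* := sup { ⟨w, x⟩ : ‖x‖ ≤ 1 }. Assume the data is non-separable, i.e., there is no w ∈ ℝ^D with s_i ⟨w, x_i⟩ > 0 for all i. Then for EVERY fixed w ∈ ℝ^D, the worst-case perturbed loss equals the regularized loss: sup { Σ_{i=1}^N max(1 − s_i ⟨w, x_i − x̃_i⟩, 0) : x̃_1, …, x̃_N ∈ ℝ^D, Σ_{i=1}^N ‖x̃_i‖ ≤ λ' } = λ' ‖w‖_* + Σ_{i=1}^N max(1 − s_i ⟨w, x_i⟩, 0). -/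
open scoped RealInnerProductSpace

lemma myNorm_sum_le (D : ℕ) (n : EuclideanSpace ℝ (Fin D) → ℝ)
    (hn0 : n 0 = 0)
    (hn_tri : ∀ v w, n (v + w) ≤ n v + n w)
    {ι : Type*} (t : Finset ι) (f : ι → EuclideanSpace ℝ (Fin D)) :
    n (∑ i ∈ t, f i) ≤ ∑ i ∈ t, n (f i) := by
  classical
  induction t using Finset.induction with
  | empty => simp [hn0]
  | insert _ _ h ih =>
    rw [Finset.sum_insert h, Finset.sum_insert h]
    exact (hn_tri _ _).trans (by linarith)

lemma myNorm_equiv (D : ℕ) (hD : 0 < D) (n : EuclideanSpace ℝ (Fin D) → ℝ)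
    (hn_nonneg : ∀ v, 0 ≤ n v)
    (hn_def : ∀ v, n v = 0 ↔ v = 0)
    (hn_homog : ∀ (c : ℝ) (v), n (c • v) = |c| * n v)
    (hn_tri : ∀ v w, n (v + w) ≤ n v + n w) :
    ∃ C > 0, ∀ v, ‖v‖ ≤ C * n v := by
  classical
  have hn0 : n 0 = 0 := (hn_def 0).2 rfl
  set C₀ : ℝ := ∑ j : Fin D, n (EuclideanSpace.single j 1) with hC₀
  have hC₀nn : 0 ≤ C₀ := Finset.sum_nonneg fun j _ => hn_nonneg _
  -- n is dominated by the Euclidean norm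
  have hub : ∀ v : EuclideanSpace ℝ (Fin D), n v ≤ C₀ * ‖v‖ := by
    intro v
    have hrepr : (∑ j : Fin D, v j • EuclideanSpace.single j (1:ℝ)) = v := by
      have := (EuclideanSpace.basisFun (Fin D) ℝ).sum_repr v
      simpa [EuclideanSpace.basisFun_apply, EuclideanSpace.basisFun_repr] using this
    calc n v = n (∑ j : Fin D, v j • EuclideanSpace.single j 1) := by rw [hrepr]
      _ ≤ ∑ j : Fin D, n (v j • EuclideanSpace.single j 1) :=
          myNorm_sum_le D n hn0 hn_tri _ _
      _ = ∑ j : Fin D, |v j| * n (EuclideanSpace.single j 1) := by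
          simp [hn_homog]
      _ ≤ ∑ j : Fin D, ‖v‖ * n (EuclideanSpace.single j 1) := by
          apply Finset.sum_le_sum
          intro j _
          apply mul_le_mul_of_nonneg_right _ (hn_nonneg _)
          have : v j = ⟪EuclideanSpace.single j (1:ℝ), v⟫ := by
            simp [EuclideanSpace.inner_single_left]
          rw [← Real.norm_eq_abs, this]
          calc ‖⟪EuclideanSpace.single j (1:ℝ), v⟫‖ ≤ ‖EuclideanSpace.single j (1:ℝ)‖ * ‖v‖ :=
                norm_inner_le_norm _ _
            _ = ‖v‖ := by simp [EuclideanSpace.norm_single]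
      _ = C₀ * ‖v‖ := by rw [← Finset.mul_sum, mul_comm]
  have hnneg : ∀ u v : EuclideanSpace ℝ (Fin D), n (u - v) = n (v - u) := by
    intro u v
    have := hn_homog (-1) (v - u)
    simpa [neg_sub] using this
  have hcont : Continuous n := by
    apply (LipschitzWith.of_dist_le_mul (K := Real.toNNReal C₀) ?_).continuous
    intro u v
    rw [Real.dist_eq, Real.coe_toNNReal _ hC₀nn, dist_eq_norm]
    have h1 : n u - n v ≤ n (u - v) := by
      have := hn_tri (u - v) v; simp only [sub_add_cancel] at this; linarith
    have h2 : n v - n u ≤ n (u - v) := by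
      have := hn_tri (v - u) u; simp only [sub_add_cancel] at this
      rw [hnneg u v]; linarith
    have := hub (u - v)
    rw [abs_le]; constructor <;> linarith
  -- minimum on the sphere
  haveI : Nonempty (Fin D) := ⟨⟨0, hD⟩⟩
  have hsne : (Metric.sphere (0 : EuclideanSpace ℝ (Fin D)) 1).Nonempty :=
    NormedSpace.sphere_nonempty.2 zero_le_one
  obtain ⟨v₀, hv₀mem, hv₀min⟩ :=
    (isCompact_sphere (0 : EuclideanSpace ℝ (Fin D)) 1).exists_isMinOn hsne hcont.continuousOn
  have hv₀norm : ‖v₀‖ = 1 := by simpa using hv₀mem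
  have hv₀ne : v₀ ≠ 0 := by
    intro h; rw [h] at hv₀norm; simp at hv₀norm
  set m : ℝ := n v₀ with hm
  have hmpos : 0 < m := lt_of_le_of_ne (hn_nonneg v₀) fun h => hv₀ne ((hn_def v₀).1 h.symm)
  refine ⟨m⁻¹, by positivity, fun v => ?_⟩
  rcases eq_or_ne v 0 with rfl | hv
  · simp [hn0]
  · have hvnorm : 0 < ‖v‖ := norm_pos_iff.2 hv
    have humem : (‖v‖⁻¹ • v) ∈ Metric.sphere (0 : EuclideanSpace ℝ (Fin D)) 1 := by
      simp [norm_smul, abs_of_pos (inv_pos.2 hvnorm), inv_mul_cancel₀ hvnorm.ne']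
    have hle : m ≤ n (‖v‖⁻¹ • v) := hv₀min humem
    rw [hn_homog, abs_of_pos (inv_pos.2 hvnorm)] at hle
    have h2 : m * ‖v‖ ≤ n v := by
      have h' := mul_le_mul_of_nonneg_right hle (le_of_lt hvnorm)
      calc m * ‖v‖ ≤ ‖v‖⁻¹ * n v * ‖v‖ := h'
        _ = n v := by field_simp
    rw [inv_mul_eq_div, le_div_iff₀ hmpos]
    linarith [h2]

/-- For every fixed weight vector `w`, under non-separability of the data,
the worst-case perturbed hinge loss (perturbations bounded in total by `λ'` in an
arbitrary norm) equals the dual-norm-regularized hinge loss. -/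
theorem worst_case_perturbed_loss_eq_regularized_loss
    (D N : ℕ) (hD : 0 < D) (hN : 0 < N)
    (x : Fin N → EuclideanSpace ℝ (Fin D)) (s : Fin N → ℝ)
    (hs : ∀ i, s i = 1 ∨ s i = -1)
    (lam : ℝ) (hlam : 0 < lam)
    (n : EuclideanSpace ℝ (Fin D) → ℝ)
    (hn_nonneg : ∀ v, 0 ≤ n v)
    (hn_def : ∀ v, n v = 0 ↔ v = 0)
    (hn_homog : ∀ (c : ℝ) (v), n (c • v) = |c| * n v)
    (hn_tri : ∀ v w, n (v + w) ≤ n v + n w)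
    (hnonsep : ¬ ∃ w : EuclideanSpace ℝ (Fin D), ∀ i, 0 < s i * ⟪w, x i⟫)
    (dualNorm : EuclideanSpace ℝ (Fin D) → ℝ)
    (hdual : ∀ w, dualNorm w = sSup {r : ℝ | ∃ v, n v ≤ 1 ∧ r = ⟪w, v⟫}) :
    ∀ w : EuclideanSpace ℝ (Fin D),
      sSup {r : ℝ | ∃ xt : Fin N → EuclideanSpace ℝ (Fin D),
          (∑ i, n (xt i)) ≤ lam ∧
          r = ∑ i, max (1 - s i * ⟪w, x i - xt i⟫) 0} =
        lam * dualNorm w + ∑ i, max (1 - s i * ⟪w, x i⟫) 0 := by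
  classical
  intro w
  have hn0 : n 0 = 0 := (hn_def 0).2 rfl
  obtain ⟨C, hCpos, hC⟩ := myNorm_equiv D hD n hn_nonneg hn_def hn_homog hn_tri
  have hsabs : ∀ i, |s i| = 1 := by
    intro i; rcases hs i with h | h <;> simp [h]
  have hssq : ∀ i, s i * s i = 1 := by
    intro i; rcases hs i with h | h <;> simp [h] <;> ring
  set Sdual : Set ℝ := {r : ℝ | ∃ v, n v ≤ 1 ∧ r = ⟪w, v⟫} with hSdual
  have hdualw : dualNorm w = sSup Sdual := hdual w
  have hSdne : Sdual.Nonempty := ⟨0, 0, by simp [hn0], by simp⟩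
  have hSdbdd : BddAbove Sdual := by
    refine ⟨‖w‖ * C, fun r hr => ?_⟩
    obtain ⟨v, hv, rfl⟩ := hr
    calc ⟪w, v⟫ ≤ ‖w‖ * ‖v‖ := real_inner_le_norm w v
      _ ≤ ‖w‖ * C := by
        apply mul_le_mul_of_nonneg_left _ (norm_nonneg w)
        calc ‖v‖ ≤ C * n v := hC v
          _ ≤ C * 1 := mul_le_mul_of_nonneg_left hv (le_of_lt hCpos)
          _ = C := mul_one C
  have hdnn : 0 ≤ dualNorm w := by
    rw [hdualw]
    exact le_csSup hSdbdd ⟨0, by simp [hn0], by simp⟩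
  have hkey : ∀ v, ⟪w, v⟫ ≤ dualNorm w * n v := by
    intro v
    rcases eq_or_lt_of_le (hn_nonneg v) with h | h
    · have hv0 : v = 0 := (hn_def v).1 h.symm
      simp [hv0, hn0]
    · have hu : n ((n v)⁻¹ • v) ≤ 1 := by
        rw [hn_homog, abs_of_pos (inv_pos.2 h), inv_mul_cancel₀ h.ne']
      have hmem : ⟪w, (n v)⁻¹ • v⟫ ∈ Sdual := ⟨_, hu, rfl⟩
      have hle : ⟪w, (n v)⁻¹ • v⟫ ≤ dualNorm w := by
        rw [hdualw]; exact le_csSup hSdbdd hmem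
      rw [real_inner_smul_right] at hle
      have := mul_le_mul_of_nonneg_right hle (le_of_lt h)
      calc ⟪w, v⟫ = (n v)⁻¹ * ⟪w, v⟫ * n v := by field_simp
        _ ≤ dualNorm w * n v := this
  have habs : ∀ v, |⟪w, v⟫| ≤ dualNorm w * n v := by
    intro v
    rw [abs_le]
    constructor
    · have := hkey (-v)
      rw [inner_neg_right] at this
      have hnv : n (-v) = n v := by
        have := hn_homog (-1) v; simpa using this
      rw [hnv] at this; linarith
    · exact hkey v
  set hinge : Fin N → ℝ := fun i => max (1 - s i * ⟪w, x i⟫) 0 with hhinge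
  set H : ℝ := ∑ i, hinge i with hH
  set S : Set ℝ := {r : ℝ | ∃ xt : Fin N → EuclideanSpace ℝ (Fin D),
          (∑ i, n (xt i)) ≤ lam ∧
          r = ∑ i, max (1 - s i * ⟪w, x i - xt i⟫) 0} with hS
  have hSne : S.Nonempty := ⟨H, fun _ => 0, by simp [hn0, le_of_lt hlam], by simp [hH, hhinge]⟩
  -- upper bound
  have hub_all : ∀ r ∈ S, r ≤ lam * dualNorm w + H := by
    rintro r ⟨xt, hxt, rfl⟩
    have hterm : ∀ i : Fin N, max (1 - s i * ⟪w, x i - xt i⟫) 0 ≤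
        hinge i + dualNorm w * n (xt i) := by
      intro i
      have h1 : ⟪w, x i - xt i⟫ = ⟪w, x i⟫ - ⟪w, xt i⟫ := inner_sub_right w (x i) (xt i)
      have h2 : |s i * ⟪w, xt i⟫| ≤ dualNorm w * n (xt i) := by
        rw [abs_mul, hsabs i, one_mul]
        exact habs (xt i)
      have h3 : 1 - s i * ⟪w, x i - xt i⟫ = (1 - s i * ⟪w, x i⟫) + s i * ⟪w, xt i⟫ := by
        rw [h1]; ring
      rw [h3]
      apply max_le
      · have : s i * ⟪w, xt i⟫ ≤ |s i * ⟪w, xt i⟫| := le_abs_self _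
        have h4 : 1 - s i * ⟪w, x i⟫ ≤ hinge i := le_max_left _ _
        linarith
      · have h4 : (0:ℝ) ≤ hinge i := le_max_right _ _
        have h5 : (0:ℝ) ≤ dualNorm w * n (xt i) := (abs_nonneg _).trans h2
        linarith
    calc (∑ i, max (1 - s i * ⟪w, x i - xt i⟫) 0)
        ≤ ∑ i, (hinge i + dualNorm w * n (xt i)) := Finset.sum_le_sum fun i _ => hterm i
      _ = H + dualNorm w * ∑ i, n (xt i) := by
          rw [Finset.sum_add_distrib, ← Finset.mul_sum, hH]
      _ ≤ H + dualNorm w * lam := by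
          have := mul_le_mul_of_nonneg_left hxt hdnn
          linarith
      _ = lam * dualNorm w + H := by ring
  have hSbdd : BddAbove S := ⟨lam * dualNorm w + H, fun r hr => hub_all r hr⟩
  -- the non-separability gives an active index
  push_neg at hnonsep
  obtain ⟨i₀, hi₀⟩ := hnonsep w
  have hhinge_i₀ : hinge i₀ = 1 - s i₀ * ⟪w, x i₀⟫ := by
    rw [hhinge]; exact max_eq_left (by linarith)
  -- lower bound
  have hlb : lam * dualNorm w + H ≤ sSup S := by
    have hstep : ∀ r ∈ Sdual, r ≤ (sSup S - H) / lam := by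
      rintro r ⟨v, hv, rfl⟩
      rw [le_div_iff₀ hlam]
      set xt : Fin N → EuclideanSpace ℝ (Fin D) :=
        fun i => if i = i₀ then (lam * s i₀) • v else 0 with hxt
      have hbudget : (∑ i, n (xt i)) ≤ lam := by
        rw [Finset.sum_eq_single i₀ (fun b _ hb => by simp [hxt, hb, hn0]) (by simp)]
        simp only [hxt, if_pos rfl]
        rw [hn_homog, abs_mul, hsabs i₀, abs_of_pos hlam, mul_one]
        calc lam * n v ≤ lam * 1 := mul_le_mul_of_nonneg_left hv (le_of_lt hlam)
          _ = lam := mul_one lam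
      set rv : ℝ := ∑ i, max (1 - s i * ⟪w, x i - xt i⟫) 0 with hrv
      have hmem : rv ∈ S := ⟨xt, hbudget, rfl⟩
      have hge : H + lam * ⟪w, v⟫ ≤ rv := by
        have hdiff : rv - H = max (1 - s i₀ * ⟪w, x i₀ - xt i₀⟫) 0 - hinge i₀ := by
          rw [hrv, hH, ← Finset.sum_sub_distrib]
          rw [Finset.sum_eq_single i₀ (fun b _ hb => by simp [hxt, hb, hhinge]) (by simp)]
        have hxti₀ : xt i₀ = (lam * s i₀) • v := if_pos rfl
        have hinner : s i₀ * ⟪w, x i₀ - xt i₀⟫ = s i₀ * ⟪w, x i₀⟫ - lam * ⟪w, v⟫ := by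
          rw [inner_sub_right, hxti₀, real_inner_smul_right]
          rcases hs i₀ with h | h <;> rw [h] <;> ring
        have hge' : max (1 - s i₀ * ⟪w, x i₀ - xt i₀⟫) 0 ≥
            1 - s i₀ * ⟪w, x i₀⟫ + lam * ⟪w, v⟫ := by
          have : 1 - s i₀ * ⟪w, x i₀ - xt i₀⟫ = 1 - s i₀ * ⟪w, x i₀⟫ + lam * ⟪w, v⟫ := by
            rw [hinner]; ring
          rw [← this]
          exact le_max_left _ _
        rw [hhinge_i₀] at hdiff
        linarith
      have := le_csSup hSbdd hmem
      linarith
    have h1 : sSup Sdual ≤ (sSup S - H) / lam := csSup_le hSdne hstep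
    rw [hdualw]
    have h2 := mul_le_mul_of_nonneg_right h1 (le_of_lt hlam)
    rw [div_mul_cancel₀ _ hlam.ne'] at h2
    linarith
  exact le_antisymm (csSup_le hSne hub_all) hlb
end

section
/- Let D, N be positive integers, let x_1, …, x_N ∈ ℝ^D, let s_1, …, s_N ∈ {−1, +1}, let λ' ≥ 0, and let ‖·‖ be any norm on ℝ^D with dual norm ‖w‖_* := sup { ⟨w, x⟩ : ‖x‖ ≤ 1 }. Then, without any separability assumption, for every w ∈ ℝ^D and every choice of perturbations x̃_1, …, x̃_N ∈ ℝ^D with Σ_{i=1}^N ‖x̃_i‖ ≤ λ', one has Σ_{i=1}^N max(1 − s_i ⟨w, x_i − x̃_i⟩, 0) ≤ λ' ‖w‖_* + Σ_{i=1}^N max(1 − s_i ⟨w, x_i⟩, 0); in particular the worst-case perturbed loss never exceeds the regularized loss. -/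
open scoped RealInnerProductSpace

section aux

variable {D : ℕ} (n : EuclideanSpace ℝ (Fin D) → ℝ)

lemma n_zero (hn_homog : ∀ (c : ℝ) (v), n (c • v) = |c| * n v) : n 0 = 0 := by
  have := hn_homog 0 0
  simpa using this

lemma n_sum (hn_homog : ∀ (c : ℝ) (v), n (c • v) = |c| * n v)
    (hn_tri : ∀ v w, n (v + w) ≤ n v + n w)
    {ι : Type*} (t : Finset ι) (f : ι → EuclideanSpace ℝ (Fin D)) :
    n (∑ i ∈ t, f i) ≤ ∑ i ∈ t, n (f i) := by
  classical
  induction t using Finset.cons_induction with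
  | empty => simp [n_zero n hn_homog]
  | cons a t ha ih =>
    rw [Finset.sum_cons, Finset.sum_cons]
    exact le_trans (hn_tri _ _) (by linarith)

lemma n_bound (hn_nonneg : ∀ v, 0 ≤ n v)
    (hn_homog : ∀ (c : ℝ) (v), n (c • v) = |c| * n v)
    (hn_tri : ∀ v w, n (v + w) ≤ n v + n w) :
    ∃ C : ℝ, 0 ≤ C ∧ ∀ v, n v ≤ C * ‖v‖ := by
  classical
  set b := EuclideanSpace.basisFun (Fin D) ℝ with hb
  refine ⟨∑ i, n (b i), Finset.sum_nonneg fun i _ => hn_nonneg _, fun v => ?_⟩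
  have hv : v = ∑ i, (v i) • b i := by
    have := b.toBasis.sum_repr v
    simpa [b] using this.symm
  have habs : ∀ i : Fin D, |v i| ≤ ‖v‖ := by
    intro i
    have h1 : v i = ⟪b i, v⟫ := by
      simp [b, EuclideanSpace.basisFun_apply, EuclideanSpace.inner_single_left]
    rw [h1]
    calc |⟪b i, v⟫| ≤ ‖b i‖ * ‖v‖ := abs_real_inner_le_norm _ _
    _ = ‖v‖ := by rw [b.orthonormal.1 i]; ring
  calc n v = n (∑ i, (v i) • b i) := by rw [← hv]
  _ ≤ ∑ i, n ((v i) • b i) := n_sum n hn_homog hn_tri _ _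
  _ = ∑ i, |v i| * n (b i) := by simp [hn_homog]
  _ ≤ ∑ i, ‖v‖ * n (b i) := Finset.sum_le_sum fun i _ =>
      mul_le_mul_of_nonneg_right (habs i) (hn_nonneg _)
  _ = (∑ i, n (b i)) * ‖v‖ := by rw [Finset.sum_mul]; simp [mul_comm]

lemma n_continuous (hn_nonneg : ∀ v, 0 ≤ n v)
    (hn_homog : ∀ (c : ℝ) (v), n (c • v) = |c| * n v)
    (hn_tri : ∀ v w, n (v + w) ≤ n v + n w) : Continuous n := by
  obtain ⟨C, hC0, hC⟩ := n_bound n hn_nonneg hn_homog hn_tri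
  have hlip : LipschitzWith (Real.toNNReal C) n := by
    apply LipschitzWith.of_dist_le_mul
    intro u v
    have key : ∀ a b : EuclideanSpace ℝ (Fin D), n a - n b ≤ C * ‖a - b‖ := by
      intro a b
      have := hn_tri (a - b) b
      simp only [sub_add_cancel] at this
      linarith [hC (a - b)]
    rw [Real.dist_eq, dist_eq_norm, Real.coe_toNNReal C hC0, abs_sub_le_iff]
    refine ⟨key u v, ?_⟩
    have := key v u
    rwa [← norm_neg, neg_sub] at this
  exact hlip.continuous

lemma n_lower (hD : 0 < D) (hn_nonneg : ∀ v, 0 ≤ n v)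
    (hn_def : ∀ v, n v = 0 ↔ v = 0)
    (hn_homog : ∀ (c : ℝ) (v), n (c • v) = |c| * n v)
    (hn_tri : ∀ v w, n (v + w) ≤ n v + n w) :
    ∃ c : ℝ, 0 < c ∧ ∀ v, c * ‖v‖ ≤ n v := by
  haveI : Nonempty (Fin D) := ⟨⟨0, hD⟩⟩
  have hne : (Metric.sphere (0 : EuclideanSpace ℝ (Fin D)) 1).Nonempty :=
    NormedSpace.sphere_nonempty.2 zero_le_one
  have hcpt : IsCompact (Metric.sphere (0 : EuclideanSpace ℝ (Fin D)) 1) :=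
    isCompact_sphere _ _
  obtain ⟨u, hu, hmin⟩ := hcpt.exists_isMinOn hne
    ((n_continuous n hn_nonneg hn_homog hn_tri).continuousOn)
  have hmin : ∀ y ∈ Metric.sphere (0 : EuclideanSpace ℝ (Fin D)) 1, n u ≤ n y := hmin
  have hu1 : ‖u‖ = 1 := by simpa using hu
  have hupos : 0 < n u := by
    rcases lt_or_eq_of_le (hn_nonneg u) with h | h
    · exact h
    · exfalso
      have : u = 0 := (hn_def u).1 h.symm
      rw [this] at hu1; simp at hu1
  refine ⟨n u, hupos, fun v => ?_⟩
  rcases eq_or_ne v 0 with rfl | hv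
  · simp [n_zero n hn_homog]
  · have hnv : ‖v‖ ≠ 0 := norm_ne_zero_iff.2 hv
    have hmem : (‖v‖⁻¹ • v) ∈ Metric.sphere (0 : EuclideanSpace ℝ (Fin D)) 1 := by
      simp [norm_smul, abs_of_nonneg (inv_nonneg.2 (norm_nonneg v)),
        inv_mul_cancel₀ hnv]
    have := hmin _ hmem
    rw [hn_homog] at this
    rw [abs_of_nonneg (inv_nonneg.2 (norm_nonneg v))] at this
    have h2 : n u * ‖v‖ ≤ ‖v‖⁻¹ * n v * ‖v‖ :=
      mul_le_mul_of_nonneg_right this (norm_nonneg v)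
    rwa [mul_comm (‖v‖⁻¹) (n v), mul_assoc, inv_mul_cancel₀ hnv, mul_one] at h2

end aux

/-- Without any separability assumption, for every weight vector `w` and every
admissible choice of perturbations (total norm at most `λ'`), the perturbed hinge loss is at
most the dual-norm-regularized hinge loss. -/
theorem perturbed_loss_le_regularized_loss
    (D N : ℕ) (hD : 0 < D) (hN : 0 < N)
    (x : Fin N → EuclideanSpace ℝ (Fin D)) (s : Fin N → ℝ)
    (hs : ∀ i, s i = 1 ∨ s i = -1)
    (lam : ℝ) (hlam : 0 ≤ lam)
    (n : EuclideanSpace ℝ (Fin D) → ℝ)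
    (hn_nonneg : ∀ v, 0 ≤ n v)
    (hn_def : ∀ v, n v = 0 ↔ v = 0)
    (hn_homog : ∀ (c : ℝ) (v), n (c • v) = |c| * n v)
    (hn_tri : ∀ v w, n (v + w) ≤ n v + n w)
    (dualNorm : EuclideanSpace ℝ (Fin D) → ℝ)
    (hdual : ∀ w, dualNorm w = sSup {r : ℝ | ∃ v, n v ≤ 1 ∧ r = ⟪w, v⟫}) :
    ∀ (w : EuclideanSpace ℝ (Fin D)) (xt : Fin N → EuclideanSpace ℝ (Fin D)),
      (∑ i, n (xt i)) ≤ lam →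
      (∑ i, max (1 - s i * ⟪w, x i - xt i⟫) 0) ≤
        lam * dualNorm w + ∑ i, max (1 - s i * ⟪w, x i⟫) 0 := by
  intro w xt hxt
  obtain ⟨c, hc0, hc⟩ := n_lower n hD hn_nonneg hn_def hn_homog hn_tri
  set S : Set ℝ := {r : ℝ | ∃ v, n v ≤ 1 ∧ r = ⟪w, v⟫} with hS
  have hSne : S.Nonempty := ⟨0, 0, by simp [n_zero n hn_homog], by simp⟩
  have hSbdd : BddAbove S := by
    refine ⟨‖w‖ * c⁻¹, fun r hr => ?_⟩
    obtain ⟨v, hv1, rfl⟩ := hr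
    calc ⟪w, v⟫ ≤ ‖w‖ * ‖v‖ := real_inner_le_norm _ _
    _ ≤ ‖w‖ * c⁻¹ := by
        apply mul_le_mul_of_nonneg_left _ (norm_nonneg w)
        have h1 : ‖v‖ ≤ 1 / c := (le_div_iff₀ hc0).2 (by linarith [hc v, mul_comm c ‖v‖ ▸ hc v])
        simpa [one_div] using h1
  -- key: ⟪w, v⟫ ≤ dualNorm w * n v for all v
  have hkey : ∀ v, ⟪w, v⟫ ≤ dualNorm w * n v := by
    intro v
    rcases eq_or_lt_of_le (hn_nonneg v) with h | h
    · have hv0 : v = 0 := (hn_def v).1 h.symm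
      simp [hv0, n_zero n hn_homog]
    · have hmem : ⟪w, (n v)⁻¹ • v⟫ ∈ S := by
        refine ⟨(n v)⁻¹ • v, ?_, rfl⟩
        rw [hn_homog, abs_of_nonneg (inv_nonneg.2 h.le), inv_mul_cancel₀ h.ne']
      have hle : ⟪w, (n v)⁻¹ • v⟫ ≤ dualNorm w := by
        rw [hdual w]; exact le_csSup hSbdd hmem
      rw [real_inner_smul_right] at hle
      have := mul_le_mul_of_nonneg_right hle h.le
      rwa [mul_comm (n v)⁻¹ _, mul_assoc, inv_mul_cancel₀ h.ne', mul_one] at this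
  have hdn0 : 0 ≤ dualNorm w := by
    have h0 : (0 : ℝ) ∈ S := ⟨0, by simp [n_zero n hn_homog], by simp⟩
    rw [hdual w]; exact le_csSup hSbdd h0
  have habs : ∀ v, |⟪w, v⟫| ≤ dualNorm w * n v := by
    intro v
    rw [abs_le]
    refine ⟨?_, hkey v⟩
    have := hkey (-v)
    rw [inner_neg_right] at this
    have hnv : n (-v) = n v := by
      have := hn_homog (-1) v; simpa using this
    rw [hnv] at this; linarith
  -- per-term bound
  have hterm : ∀ i, max (1 - s i * ⟪w, x i - xt i⟫) 0 ≤
      max (1 - s i * ⟪w, x i⟫) 0 + dualNorm w * n (xt i) := by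
    intro i
    have hrhs0 : 0 ≤ max (1 - s i * ⟪w, x i⟫) 0 + dualNorm w * n (xt i) :=
      add_nonneg (le_max_right _ _) (mul_nonneg hdn0 (hn_nonneg _))
    apply max_le _ hrhs0
    have hsplit : ⟪w, x i - xt i⟫ = ⟪w, x i⟫ - ⟪w, xt i⟫ := inner_sub_right _ _ _
    have hsabs : |s i| = 1 := by rcases hs i with h | h <;> simp [h]
    have h1 : s i * ⟪w, xt i⟫ ≤ dualNorm w * n (xt i) := by
      calc s i * ⟪w, xt i⟫ ≤ |s i * ⟪w, xt i⟫| := le_abs_self _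
      _ = |⟪w, xt i⟫| := by rw [abs_mul, hsabs, one_mul]
      _ ≤ dualNorm w * n (xt i) := habs _
    have h2 : 1 - s i * ⟪w, x i⟫ ≤ max (1 - s i * ⟪w, x i⟫) 0 := le_max_left _ _
    calc 1 - s i * ⟪w, x i - xt i⟫
        = (1 - s i * ⟪w, x i⟫) + s i * ⟪w, xt i⟫ := by rw [hsplit]; ring
    _ ≤ max (1 - s i * ⟪w, x i⟫) 0 + dualNorm w * n (xt i) := add_le_add h2 h1
  calc (∑ i, max (1 - s i * ⟪w, x i - xt i⟫) 0)
      ≤ ∑ i, (max (1 - s i * ⟪w, x i⟫) 0 + dualNorm w * n (xt i)) :=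
        Finset.sum_le_sum fun i _ => hterm i
  _ = (∑ i, max (1 - s i * ⟪w, x i⟫) 0) + dualNorm w * ∑ i, n (xt i) := by
        rw [Finset.sum_add_distrib, Finset.mul_sum]
  _ ≤ (∑ i, max (1 - s i * ⟪w, x i⟫) 0) + dualNorm w * lam := by
        have := mul_le_mul_of_nonneg_left hxt hdn0
        linarith
  _ = lam * dualNorm w + ∑ i, max (1 - s i * ⟪w, x i⟫) 0 := by ring
end

section
/- Let D, N be positive integers, let x_1, …, x_N ∈ ℝ^D, let s_1, …, s_N ∈ {−1, +1}, and let λ' > 0. Assume the data is non-separable, i.e., there is no w ∈ ℝ^D with s_i ⟨w, x_i⟩ > 0 for all i. Consider perturbations bounded in the ℓ∞ norm ‖x̃‖_∞ := max_{1 ≤ d ≤ D} |x̃_d|. Then inf_{w ∈ ℝ^D} sup { Σ_{i=1}^N max(1 − s_i ⟨w, x_i − x̃_i⟩, 0) : x̃_1, …, x̃_N ∈ ℝ^D, Σ_{i=1}^N ‖x̃_i‖_∞ ≤ λ' } = inf_{w ∈ ℝ^D} ( λ' ‖w‖_1 + Σ_{i=1}^N max(1 − s_i ⟨w, x_i⟩,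 0) ), where ‖w‖_1 := Σ_{d=1}^D |w_d|, and a vector w attains the first infimum if and only if it attains the second. -/
open scoped RealInnerProductSpace

/-- Under non-separability of the data, the robust optimization problem with
perturbations bounded in total `ℓ∞` norm by `λ'` has the same optimal value and the same set of
minimizers as the `ℓ1`-regularized hinge-loss problem. -/
theorem robust_linf_eq_l1_regularized
    (D N : ℕ) (hD : 0 < D) (hN : 0 < N)
    (x : Fin N → EuclideanSpace ℝ (Fin D)) (s : Fin N → ℝ)
    (hs : ∀ i, s i = 1 ∨ s i = -1)
    (lam : ℝ) (hlam : 0 < lam)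
    (hnonsep : ¬ ∃ w : EuclideanSpace ℝ (Fin D), ∀ i, 0 < s i * ⟪w, x i⟫)
    (F G : EuclideanSpace ℝ (Fin D) → ℝ)
    (hF : ∀ w, F w = sSup {r : ℝ | ∃ xt : Fin N → EuclideanSpace ℝ (Fin D),
        (∑ i, ⨆ d, |xt i d|) ≤ lam ∧
        r = ∑ i, max (1 - s i * ⟪w, x i - xt i⟫) 0})
    (hG : ∀ w, G w = lam * (∑ d, |w d|) + ∑ i, max (1 - s i * ⟪w, x i⟫) 0) :
    (⨅ w, F w) = (⨅ w, G w) ∧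
    (∀ w, F w = (⨅ w', F w') ↔ G w = (⨅ w', G w')) := by
  haveI : Nonempty (Fin D) := ⟨⟨0, hD⟩⟩
  have habs : ∀ i, |s i| = 1 := by intro i; rcases hs i with h | h <;> simp [h]
  have hsq : ∀ i, s i * s i = 1 := by intro i; rcases hs i with h | h <;> simp [h]
  have hsign_mul : ∀ y : ℝ, y * Real.sign y = |y| := by
    intro y
    rcases lt_trichotomy y 0 with h | h | h
    · simp [Real.sign_of_neg h, abs_of_neg h]
    · simp [h]
    · simp [Real.sign_of_pos h, abs_of_pos h]
  have hsign_abs : ∀ y : ℝ, |Real.sign y| ≤ 1 := by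
    intro y
    rcases lt_trichotomy y 0 with h | h | h
    · simp [Real.sign_of_neg h]
    · simp [h]
    · simp [Real.sign_of_pos h]
  have hinner : ∀ (w v : EuclideanSpace ℝ (Fin D)), ⟪w, v⟫ = ∑ d, w d * v d := by
    intro w v; simp [PiLp.inner_apply, RCLike.inner_apply]
    exact Finset.sum_congr rfl fun _ _ => mul_comm _ _
  have hFG : ∀ w, F w = G w := by
    intro w
    set L : ℝ := ∑ d, |w d| with hLdef
    have hL0 : 0 ≤ L := Finset.sum_nonneg fun d _ => abs_nonneg _
    -- the index with nonpositive margin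
    obtain ⟨i0, hi0⟩ : ∃ i, s i * ⟪w, x i⟫ ≤ 0 := by
      by_contra h
      push_neg at h
      exact hnonsep ⟨w, fun i => h i⟩
    -- sup bounds
    have hsup_nonneg : ∀ (v : EuclideanSpace ℝ (Fin D)), (0:ℝ) ≤ ⨆ d, |v d| := by
      intro v
      exact le_trans (abs_nonneg (v ⟨0, hD⟩))
        (le_ciSup (f := fun d => |v d|) (Set.Finite.bddAbove (Set.finite_range _)) ⟨0, hD⟩)
    have hip_le : ∀ (v : EuclideanSpace ℝ (Fin D)), |⟪w, v⟫| ≤ (⨆ d, |v d|) * L := by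
      intro v
      rw [hinner]
      calc |∑ d, w d * v d| ≤ ∑ d, |w d * v d| := Finset.abs_sum_le_sum_abs _ _
        _ ≤ ∑ d, (⨆ d', |v d'|) * |w d| := by
            refine Finset.sum_le_sum fun d _ => ?_
            rw [abs_mul, mul_comm]
            exact mul_le_mul_of_nonneg_right
              (le_ciSup (f := fun d' => |v d'|) (Set.Finite.bddAbove (Set.finite_range _)) d)
              (abs_nonneg _)
        _ = (⨆ d, |v d|) * L := by rw [← Finset.mul_sum]
    -- upper bound: every element of the set is ≤ G w
    have hub : ∀ r ∈ {r : ℝ | ∃ xt : Fin N → EuclideanSpace ℝ (Fin D),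
        (∑ i, ⨆ d, |xt i d|) ≤ lam ∧
        r = ∑ i, max (1 - s i * ⟪w, x i - xt i⟫) 0}, r ≤ G w := by
      rintro r ⟨xt, hbudget, rfl⟩
      rw [hG]
      have hterm : ∀ i, max (1 - s i * ⟪w, x i - xt i⟫) 0
          ≤ max (1 - s i * ⟪w, x i⟫) 0 + (⨆ d, |xt i d|) * L := by
        intro i
        have hb : s i * ⟪w, xt i⟫ ≤ (⨆ d, |xt i d|) * L := by
          calc s i * ⟪w, xt i⟫ ≤ |s i * ⟪w, xt i⟫| := le_abs_self _
            _ = |⟪w, xt i⟫| := by rw [abs_mul, habs i, one_mul]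
            _ ≤ (⨆ d, |xt i d|) * L := hip_le _
        have hb0 : 0 ≤ (⨆ d, |xt i d|) * L := mul_nonneg (hsup_nonneg _) hL0
        have h1 : 1 - s i * ⟪w, x i - xt i⟫
            = (1 - s i * ⟪w, x i⟫) + s i * ⟪w, xt i⟫ := by
          rw [inner_sub_right]; ring
        rw [h1]
        calc max ((1 - s i * ⟪w, x i⟫) + s i * ⟪w, xt i⟫) 0
            ≤ max ((1 - s i * ⟪w, x i⟫) + (⨆ d, |xt i d|) * L) 0 := by
              exact max_le_max (by linarith) le_rfl
          _ ≤ max (1 - s i * ⟪w, x i⟫) 0 + (⨆ d, |xt i d|) * L := by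
              rcases le_total ((1 - s i * ⟪w, x i⟫) + (⨆ d, |xt i d|) * L) 0 with h | h
              · rw [max_eq_right h]
                positivity
              · rw [max_eq_left h]
                have := le_max_left (1 - s i * ⟪w, x i⟫) 0
                linarith [le_max_left (1 - s i * ⟪w, x i⟫) (0:ℝ)]
      calc ∑ i, max (1 - s i * ⟪w, x i - xt i⟫) 0
          ≤ ∑ i, (max (1 - s i * ⟪w, x i⟫) 0 + (⨆ d, |xt i d|) * L) :=
            Finset.sum_le_sum fun i _ => hterm i
        _ = (∑ i, max (1 - s i * ⟪w, x i⟫) 0) + (∑ i, ⨆ d, |xt i d|) * L := by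
            rw [Finset.sum_add_distrib, Finset.sum_mul]
        _ ≤ (∑ i, max (1 - s i * ⟪w, x i⟫) 0) + lam * L := by
            have := mul_le_mul_of_nonneg_right hbudget hL0
            linarith
        _ = lam * L + ∑ i, max (1 - s i * ⟪w, x i⟫) 0 := by ring
    -- membership: G w is attained
    have hmem : G w ∈ {r : ℝ | ∃ xt : Fin N → EuclideanSpace ℝ (Fin D),
        (∑ i, ⨆ d, |xt i d|) ≤ lam ∧
        r = ∑ i, max (1 - s i * ⟪w, x i - xt i⟫) 0} := by
      classical
      let u : EuclideanSpace ℝ (Fin D) := WithLp.toLp 2 (fun d => lam * s i0 * Real.sign (w d))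
      refine ⟨fun j => if j = i0 then u else 0, ?_, ?_⟩
      · have h1 : ∀ j : Fin N, (⨆ d, |(if j = i0 then u else 0) d|) = if j = i0 then
            (⨆ d, |u d|) else 0 := by
          intro j
          by_cases h : j = i0 <;> simp [h, ciSup_const]
        rw [Finset.sum_congr rfl fun j _ => h1 j, Finset.sum_ite_eq' Finset.univ i0]
        simp only [Finset.mem_univ, if_true]
        refine ciSup_le fun d => ?_
        show |lam * s i0 * Real.sign (w d)| ≤ lam
        rw [abs_mul, abs_mul, abs_of_pos hlam, habs i0, mul_one]
        nlinarith [hsign_abs (w d)]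
      · have hxt0 : ⟪w, u⟫ = lam * s i0 * L := by
          rw [hinner]
          rw [hLdef, Finset.mul_sum]
          refine Finset.sum_congr rfl fun d _ => ?_
          show w d * (lam * s i0 * Real.sign (w d)) = lam * s i0 * |w d|
          rw [← hsign_mul (w d)]; ring
        have hterm : ∀ j : Fin N, max (1 - s j * ⟪w, x j - (if j = i0 then u else 0)⟫) 0
            = max (1 - s j * ⟪w, x j⟫) 0 + (if j = i0 then lam * L else 0) := by
          intro j
          by_cases h : j = i0
          · subst h
            rw [if_pos rfl, if_pos rfl, inner_sub_right, hxt0]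
            have hmargin : (1:ℝ) ≤ 1 - s j * ⟪w, x j⟫ := by linarith
            have h2 : 1 - s j * (⟪w, x j⟫ - lam * s j * L) =
                (1 - s j * ⟪w, x j⟫) + lam * L := by
              linear_combination lam * L * hsq j
            rw [h2]
            rw [max_eq_left (by nlinarith), max_eq_left (by linarith)]
          · simp [h]
        rw [Finset.sum_congr rfl fun j _ => hterm j, Finset.sum_add_distrib,
          Finset.sum_ite_eq' Finset.univ i0]
        simp only [Finset.mem_univ, if_true]
        rw [hG]; ring
    rw [hF w]
    exact le_antisymm (csSup_le ⟨G w, hmem⟩ hub)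
      (le_csSup ⟨G w, hub⟩ hmem)
  have hinf : (⨅ w, F w) = (⨅ w, G w) := by
    exact iInf_congr hFG
  exact ⟨hinf, fun w => by rw [hFG w, hinf]⟩
end

section
/- Let g : ℝ^D → ℝ and h : ℝ^D → ℝ be convex functions. Then the union, over all pairs (λ_1, λ_2) of nonnegative real numbers not both zero, of the sets of global minimizers of w ↦ λ_1 g(w) + λ_2 h(w), coincides with the set of weakly efficient solutions of the pair (g, h). -/
/-- A point `w` is Pareto efficient for the pair of objectives `(g, h)` if there is no `w'`
which is at least as good on both objectives and strictly better on at least one. -/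
def ParetoEfficient {E : Type*} (g h : E → ℝ) (w : E) : Prop :=
  ¬ ∃ w', (g w' ≤ g w ∧ h w' ≤ h w) ∧ (g w' < g w ∨ h w' < h w)

/-- A point `w` is weakly efficient for the pair of objectives `(g, h)` if it is a global
minimizer of `g`, or a global minimizer of `h`, or Pareto efficient for `(g, h)`. -/
def WeaklyEfficient {E : Type*} (g h : E → ℝ) (w : E) : Prop :=
  (∀ w', g w ≤ g w') ∨ (∀ w', h w ≤ h w') ∨ ParetoEfficient g h w

/-- For convex `g, h : ℝ^D → ℝ`, the union over all pairs `(λ₁, λ₂)` of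
nonnegative reals, not both zero, of the sets of global minimizers of `λ₁ g + λ₂ h` coincides
with the set of weakly efficient solutions of the pair `(g, h)`. -/
theorem union_argmin_weighted_sum_eq_weaklyEfficient
    (D : ℕ) (g h : EuclideanSpace ℝ (Fin D) → ℝ)
    (hg : ConvexOn ℝ Set.univ g) (hh : ConvexOn ℝ Set.univ h) :
    {w : EuclideanSpace ℝ (Fin D) | ∃ l₁ l₂ : ℝ, 0 ≤ l₁ ∧ 0 ≤ l₂ ∧ ¬(l₁ = 0 ∧ l₂ = 0) ∧
        ∀ w', l₁ * g w + l₂ * h w ≤ l₁ * g w' + l₂ * h w'} =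
    {w : EuclideanSpace ℝ (Fin D) | WeaklyEfficient g h w} := by
  ext w
  simp only [Set.mem_setOf_eq]
  constructor
  · rintro ⟨l₁, l₂, h1, h2, h3, hmin⟩
    rcases eq_or_lt_of_le h1 with hl1 | hl1
    · rcases eq_or_lt_of_le h2 with hl2 | hl2
      · exact absurd ⟨hl1.symm, hl2.symm⟩ h3
      · refine Or.inr (Or.inl fun w' => ?_)
        have := hmin w'
        rw [← hl1] at this
        nlinarith
    · rcases eq_or_lt_of_le h2 with hl2 | hl2
      · refine Or.inl fun w' => ?_
        have := hmin w'
        rw [← hl2] at this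
        nlinarith
      · refine Or.inr (Or.inr ?_)
        rintro ⟨w', ⟨hgle, hhle⟩, hstrict⟩
        have := hmin w'
        rcases hstrict with hs | hs
        · nlinarith
        · nlinarith
  · rintro (hmg | hmh | hpar)
    · exact ⟨1, 0, zero_le_one, le_refl 0, by simp, fun w' => by simpa using hmg w'⟩
    · exact ⟨0, 1, le_refl 0, zero_le_one, by simp, fun w' => by simpa using hmh w'⟩
    · -- separation argument
      set C : Set (ℝ × ℝ) := {p | ∃ w', g w' ≤ p.1 ∧ h w' ≤ p.2} with hCdef
      have hCconv : Convex ℝ C := by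
        rintro x ⟨w₁, hx1, hx2⟩ y ⟨w₂, hy1, hy2⟩ a b ha hb hab
        refine ⟨a • w₁ + b • w₂, ?_, ?_⟩
        · have := hg.2 (Set.mem_univ w₁) (Set.mem_univ w₂) ha hb hab
          simp only [smul_eq_mul] at this ⊢
          have h1 : a * g w₁ + b * g w₂ ≤ a * x.1 + b * y.1 := by nlinarith
          calc g (a • w₁ + b • w₂) ≤ a * g w₁ + b * g w₂ := this
            _ ≤ a * x.1 + b * y.1 := h1
            _ = (a • x + b • y).1 := by simp
        · have := hh.2 (Set.mem_univ w₁) (Set.mem_univ w₂) ha hb hab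
          simp only [smul_eq_mul] at this ⊢
          have h1 : a * h w₁ + b * h w₂ ≤ a * x.2 + b * y.2 := by nlinarith
          calc h (a • w₁ + b • w₂) ≤ a * h w₁ + b * h w₂ := this
            _ ≤ a * x.2 + b * y.2 := h1
            _ = (a • x + b • y).2 := by simp
      set O : Set (ℝ × ℝ) := Set.Iio (g w) ×ˢ Set.Iio (h w) with hOdef
      have hOconv : Convex ℝ O := (convex_Iio _).prod (convex_Iio _)
      have hOopen : IsOpen O := isOpen_Iio.prod isOpen_Iio
      have hdisj : Disjoint O C := by
        rw [Set.disjoint_left]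
        rintro x ⟨hx1, hx2⟩ ⟨w', hw1, hw2⟩
        exact hpar ⟨w', ⟨hw1.trans (le_of_lt hx1), hw2.trans (le_of_lt hx2)⟩,
          Or.inl (lt_of_le_of_lt hw1 hx1)⟩
      obtain ⟨f, u, hfO, hfC⟩ := geometric_hahn_banach_open hOconv hOopen hCconv hdisj
      set l₁ : ℝ := f (1, 0) with hl1def
      set l₂ : ℝ := f (0, 1) with hl2def
      have hf : ∀ x : ℝ × ℝ, f x = x.1 * l₁ + x.2 * l₂ := by
        intro x
        have hx : x = x.1 • ((1:ℝ), (0:ℝ)) + x.2 • ((0:ℝ), (1:ℝ)) := by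
          simp [Prod.ext_iff]
        conv_lhs => rw [hx]
        rw [map_add, map_smul, map_smul, smul_eq_mul, smul_eq_mul, ← hl1def, ← hl2def]
      have hpC : ((g w, h w) : ℝ × ℝ) ∈ C := ⟨w, le_refl _, le_refl _⟩
      have hup : u ≤ g w * l₁ + h w * l₂ := by
        have := hfC _ hpC
        rwa [hf] at this
      have hOlt : ∀ a b : ℝ, a < g w → b < h w → a * l₁ + b * l₂ < u := by
        intro a b ha hb
        have := hfO (a, b) ⟨ha, hb⟩
        rwa [hf] at this
      have hl1 : 0 ≤ l₁ := by
        by_contra hneg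
        push_neg at hneg
        set t := max 1 ((u - (g w * l₁ + h w * l₂) + l₂ + 1) / (-l₁)) with ht
        have ht1 : (1:ℝ) ≤ t := le_max_left _ _
        have ht0 : (u - (g w * l₁ + h w * l₂) + l₂ + 1) / (-l₁) ≤ t := le_max_right _ _
        have h2 : u - (g w * l₁ + h w * l₂) + l₂ + 1 ≤ t * (-l₁) := by
          rw [div_le_iff₀ (by linarith)] at ht0
          linarith
        have h3 := hOlt (g w - t) (h w - 1) (by linarith) (by linarith)
        nlinarith
      have hl2 : 0 ≤ l₂ := by
        by_contra hneg
        push_neg at hneg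
        set t := max 1 ((u - (g w * l₁ + h w * l₂) + l₁ + 1) / (-l₂)) with ht
        have ht1 : (1:ℝ) ≤ t := le_max_left _ _
        have ht0 : (u - (g w * l₁ + h w * l₂) + l₁ + 1) / (-l₂) ≤ t := le_max_right _ _
        have h2 : u - (g w * l₁ + h w * l₂) + l₁ + 1 ≤ t * (-l₂) := by
          rw [div_le_iff₀ (by linarith)] at ht0
          linarith
        have h3 := hOlt (g w - 1) (h w - t) (by linarith) (by linarith)
        nlinarith
      have hpu : g w * l₁ + h w * l₂ ≤ u := by
        by_contra hgt
        push_neg at hgt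
        set ε := (g w * l₁ + h w * l₂ - u) / (l₁ + l₂ + 1) with hε
        have hεpos : 0 < ε := by
          apply div_pos (by linarith) (by linarith)
        have h3 := hOlt (g w - ε) (h w - ε) (by linarith) (by linarith)
        have h4 : ε * (l₁ + l₂ + 1) = g w * l₁ + h w * l₂ - u := by
          rw [hε, div_mul_cancel₀ _ (by linarith : l₁ + l₂ + 1 ≠ 0)]
        nlinarith
      have hne : ¬(l₁ = 0 ∧ l₂ = 0) := by
        rintro ⟨hz1, hz2⟩
        have h3 := hOlt (g w - 1) (h w - 1) (by linarith) (by linarith)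
        rw [hz1, hz2] at h3 hup
        simp at h3 hup
        linarith
      refine ⟨l₁, l₂, hl1, hl2, hne, fun w' => ?_⟩
      have hC' : ((g w', h w') : ℝ × ℝ) ∈ C := ⟨w', le_refl _, le_refl _⟩
      have := hfC _ hC'
      rw [hf] at this
      simp only at this
      nlinarith
end
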